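/- For every field K and all c, d, m ∈ K \ {0}, the two-dimensional evolution algebras A_{(e_2, c e_1 + d e_2)} and A_{(e_2, (c/m³) e_1 + (d/m²) e_2)} over K are isomorphic. -/

import Mathlib

open scoped BigOperators

noncomputable section

/-- The product in the `n`-dimensional evolution algebra over `K` (on the model space
`Fin n → K`, whose standard basis is the natural basis) with structure constants `t`,
so that `eᵢ * eᵢ = ∑ⱼ t i j • eⱼ` and `eᵢ * eⱼ = 0` for `i ≠ j`. -/
def evolMul {K : Type*} [Field K] {n : ℕ} (t : Fin n → Fin n → K)
    (x y : Fin n → K) : Fin n → K :=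
  fun k => ∑ i, x i * y i * t i k

lemma evolMul_add_left {K : Type*} [Field K] {n : ℕ} (t : Fin n → Fin n → K)
    (a b v : Fin n → K) : evolMul t (a + b) v = evolMul t a v + evolMul t b v := by
  funext k
  simp [evolMul, add_mul, Finset.sum_add_distrib]

lemma evolMul_add_right {K : Type*} [Field K] {n : ℕ} (t : Fin n → Fin n → K)
    (v a b : Fin n → K) : evolMul t v (a + b) = evolMul t v a + evolMul t v b := by
  funext k
  simp [evolMul, mul_add, add_mul, Finset.sum_add_distrib]

lemma evolMul_smul_left {K : Type*} [Field K] {n : ℕ} (t : Fin n → Fin n → K)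
    (c : K) (a v : Fin n → K) : evolMul t (c • a) v = c • evolMul t a v := by
  funext k
  simp [evolMul, Finset.mul_sum, mul_assoc]

lemma evolMul_smul_right {K : Type*} [Field K] {n : ℕ} (t : Fin n → Fin n → K)
    (c : K) (v a : Fin n → K) : evolMul t v (c • a) = c • evolMul t v a := by
  funext k
  simp [evolMul, Finset.mul_sum]
  ring_nf
  apply Finset.sum_congr rfl
  intro i _
  ring

/-- The annihilator of the evolution algebra with structure constants `t`. -/
def evolAnn {K : Type*} [Field K] {n : ℕ} (t : Fin n → Fin n → K) :
    Submodule K (Fin n → K) where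
  carrier := {u | ∀ v, evolMul t u v = 0 ∧ evolMul t v u = 0}
  zero_mem' := by
    intro v
    constructor <;> · funext k; simp [evolMul]
  add_mem' := by
    intro a b ha hb v
    exact ⟨by rw [evolMul_add_left, (ha v).1, (hb v).1, add_zero],
           by rw [evolMul_add_right, (ha v).2, (hb v).2, add_zero]⟩
  smul_mem' := by
    intro c a ha v
    exact ⟨by rw [evolMul_smul_left, (ha v).1, smul_zero],
           by rw [evolMul_smul_right, (ha v).2, smul_zero]⟩

/-- The derived algebra (span of all products). -/
def evolDerived {K : Type*} [Field K] {n : ℕ} (t : Fin n → Fin n → K) :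
    Submodule K (Fin n → K) :=
  Submodule.span K {w | ∃ u v, evolMul t u v = w}

/-- Two evolution algebras (given by structure constants) are isomorphic. -/
def EvolIsom {K : Type*} [Field K] {n : ℕ} (t t' : Fin n → Fin n → K) : Prop :=
  ∃ f : (Fin n → K) ≃ₗ[K] (Fin n → K),
    ∀ u v, evolMul t' (f u) (f v) = f (evolMul t u v)

/-- Two evolution algebras (given by structure constants) are isotopic. -/
def EvolIsotopic {K : Type*} [Field K] {n : ℕ} (t t' : Fin n → Fin n → K) : Prop :=
  ∃ f g h : (Fin n → K) ≃ₗ[K] (Fin n → K),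
    ∀ u v, evolMul t' (f u) (g v) = h (evolMul t u v)

/-- Two evolution algebras (given by structure constants) are strongly isotopic. -/
def EvolStrongIsotopic {K : Type*} [Field K] {n : ℕ} (t t' : Fin n → Fin n → K) : Prop :=
  ∃ f h : (Fin n → K) ≃ₗ[K] (Fin n → K),
    ∀ u v, evolMul t' (f u) (f v) = h (evolMul t u v)

/-- Structure constants of the two-dimensional evolution algebra
`A_{(a e₁ + b e₂, c e₁ + d e₂)}`, i.e. with natural basis `{e₁, e₂}` and products
`e₁e₁ = a e₁ + b e₂`, `e₂e₂ = c e₁ + d e₂`, `e₁e₂ = e₂e₁ = 0`. -/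
def evA {K : Type*} [Field K] (a b c d : K) : Fin 2 → Fin 2 → K :=
  ![![a, b], ![c, d]]

/-
STATEMENT 18: For every field K and all c, d, m ∈ K \ {0}, the two-dimensional
evolution algebras A_{(e₂, c e₁ + d e₂)} and A_{(e₂, (c/m³) e₁ + (d/m²) e₂)} over K
are isomorphic.
-/
theorem isom_case22 {K : Type*} [Field K] (c d m : K) (hc : c ≠ 0) (hd : d ≠ 0)
    (hm : m ≠ 0) :
    EvolIsom (evA (0 : K) 1 c d) (evA (0 : K) 1 (c / m ^ 3) (d / m ^ 2)) := by
  have hne : ∀ i : Fin 2, (![m, m ^ 2] : Fin 2 → K) i ≠ 0 := by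
    intro i; fin_cases i <;> simp [hm, pow_ne_zero]
  refine ⟨LinearEquiv.piCongrRight fun i =>
      LinearEquiv.smulOfNeZero K K _ (hne i), ?_⟩
  intro u v
  funext k
  have hfu : ∀ (x : Fin 2 → K) (i : Fin 2),
      (LinearEquiv.piCongrRight fun i => LinearEquiv.smulOfNeZero K K _ (hne i)) x i
        = ![m, m ^ 2] i * x i := by
    intro x i; rfl
  simp only [evolMul, hfu, evA, Fin.sum_univ_two]
  fin_cases k <;>
  · simp [evA]
    field_simp
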